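/- If (g, h, k) ∈ GL₃(ℂ)³ satisfies [a₀] = [g a₀ h⁻¹] = [h a₀ k⁻¹] = [k a₀ g⁻¹] in PGL₃ (i.e., these are equal up to nonzero scalars), then g, h, and k each commute with a₀, where a₀ = [[0,0,-1],[1,0,-1],[0,1,-1]]. -/

import Mathlib

namespace Stmt13

noncomputable def a₀ : Matrix (Fin 3) (Fin 3) ℂ := !![0, 0, -1; 1, 0, -1; 0, 1, -1]

lemma ha4 : a₀ ^ 4 = 1 := by
  rw [show (1 : Matrix (Fin 3) (Fin 3) ℂ) = !![1,0,0;0,1,0;0,0,1] from Matrix.one_fin_three]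
  norm_num [a₀, pow_succ, Matrix.mul_fin_three]

lemma hadet : a₀.det = -1 := by
  simp [a₀, Matrix.det_fin_three]

lemma h4 : a₀ ^ 3 * a₀ = 1 := by rw [← pow_succ]; exact ha4

lemma h4' : a₀ * a₀ ^ 3 = 1 := by rw [← pow_succ']; exact ha4

/-- If (g,h,k) ∈ GL₃(ℂ)³ satisfies [a₀] = [g a₀ h⁻¹] = [h a₀ k⁻¹] = [k a₀ g⁻¹]
in PGL₃ (equality up to nonzero scalars), then g, h, and k each commute with a₀. -/
theorem stmt_13 (g h k : Matrix (Fin 3) (Fin 3) ℂ)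
    (hg : IsUnit g) (hh : IsUnit h) (hk : IsUnit k)
    (α β γ : ℂ) (hα : α ≠ 0) (hβ : β ≠ 0) (hγ : γ ≠ 0)
    (h1 : g * a₀ * h⁻¹ = α • a₀)
    (h2 : h * a₀ * k⁻¹ = β • a₀)
    (h3 : k * a₀ * g⁻¹ = γ • a₀) :
    g * a₀ = a₀ * g ∧ h * a₀ = a₀ * h ∧ k * a₀ = a₀ * k := by
  have hgd : IsUnit g.det := (Matrix.isUnit_iff_isUnit_det g).mp hg
  have hhd : IsUnit h.det := (Matrix.isUnit_iff_isUnit_det h).mp hh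
  have hkd : IsUnit k.det := (Matrix.isUnit_iff_isUnit_det k).mp hk
  -- turn the hypotheses into relations without inverses
  have e1 : g * a₀ = α • (a₀ * h) := by
    have := congrArg (· * h) h1
    simpa [Matrix.mul_assoc, Matrix.nonsing_inv_mul h hhd, Matrix.smul_mul] using this
  have e2 : h * a₀ = β • (a₀ * k) := by
    have := congrArg (· * k) h2
    simpa [Matrix.mul_assoc, Matrix.nonsing_inv_mul k hkd, Matrix.smul_mul] using this
  have e3 : k * a₀ = γ • (a₀ * g) := by
    have := congrArg (· * g) h3
    simpa [Matrix.mul_assoc, Matrix.nonsing_inv_mul g hgd, Matrix.smul_mul] using this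
  set s : ℂ := α * β * γ with hs
  -- key relation : g * a₀ ^ 3 = s • (a₀ ^ 3 * g)
  have E : g * a₀ ^ 3 = s • (a₀ ^ 3 * g) := by
    have c1 : g * a₀ ^ 3 = ((g * a₀) * a₀) * a₀ := by
      rw [pow_succ, pow_succ, pow_one, ← Matrix.mul_assoc, ← Matrix.mul_assoc]
    rw [c1, e1, Matrix.smul_mul, Matrix.smul_mul, Matrix.mul_assoc a₀ h a₀, e2,
      Matrix.mul_smul, Matrix.smul_mul, smul_smul, Matrix.mul_assoc, Matrix.mul_assoc, e3,
      Matrix.mul_smul, Matrix.mul_smul, smul_smul]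
    rw [pow_succ, pow_succ, pow_one, Matrix.mul_assoc, Matrix.mul_assoc]
  -- s ^ 3 = 1 via determinants
  have hs3 : s ^ 3 = 1 := by
    have hd := congrArg Matrix.det E
    rw [Matrix.det_mul, Matrix.det_smul, Matrix.det_mul, Matrix.det_pow, hadet,
      Fintype.card_fin] at hd
    have hc : s ^ 3 * g.det = 1 * g.det := by rw [one_mul]; linear_combination hd
    exact mul_right_cancel₀ hgd.ne_zero hc
  -- iterate the key relation
  have key : ∀ n : ℕ, g * (a₀ ^ 3) ^ n = s ^ n • ((a₀ ^ 3) ^ n * g) := by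
    intro n
    induction n with
    | zero => simp
    | succ n ih =>
      rw [pow_succ (a₀ ^ 3) n, pow_succ s n, ← Matrix.mul_assoc, ih, Matrix.smul_mul,
        Matrix.mul_assoc, E, Matrix.mul_smul, smul_smul, ← Matrix.mul_assoc]
  have hg0 : g ≠ 0 := by
    intro h0
    rw [h0] at hgd
    simp [Matrix.det_zero] at hgd
  have hs4 : s ^ 4 = 1 := by
    have h12 : (a₀ ^ 3) ^ 4 = 1 := by
      rw [← pow_mul, show 3 * 4 = 4 * 3 by ring, pow_mul, ha4, one_pow]
    have hk4 := key 4
    rw [h12, Matrix.mul_one, Matrix.one_mul] at hk4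
    have hz : (s ^ 4 - 1) • g = 0 := by
      rw [sub_smul, one_smul, ← hk4, sub_self]
    rcases smul_eq_zero.mp hz with h' | h'
    · exact sub_eq_zero.mp h'
    · exact absurd h' hg0
  have hs1 : s = 1 := by
    have hss : s * s ^ 3 = s ^ 4 := by ring
    rw [hs3, mul_one] at hss
    rw [hss, hs4]
  -- g commutes with a₀
  have Egc : g * a₀ ^ 3 = a₀ ^ 3 * g := by rw [E, hs1, one_smul]
  have hga : g * a₀ = a₀ * g := by
    have hc := congrArg (fun m => a₀ * m * a₀) Egc
    rw [← Matrix.mul_assoc a₀ g (a₀ ^ 3), Matrix.mul_assoc (a₀ * g) (a₀ ^ 3) a₀, h4,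
      Matrix.mul_one, ← Matrix.mul_assoc a₀ (a₀ ^ 3) g, h4', Matrix.one_mul] at hc
    exact hc.symm
  -- h = α⁻¹ • g
  have step1 : a₀ * h = α⁻¹ • (a₀ * g) := by
    rw [eq_inv_smul_iff₀ hα, ← e1, hga]
  have hhg : h = α⁻¹ • g := by
    have hc := congrArg (fun m => a₀ ^ 3 * m) step1
    rw [← Matrix.mul_assoc, h4, Matrix.one_mul, Matrix.mul_smul,
      ← Matrix.mul_assoc, h4, Matrix.one_mul] at hc
    exact hc
  have hha : h * a₀ = a₀ * h := by
    rw [hhg, Matrix.smul_mul, Matrix.mul_smul, hga]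
  -- k = β⁻¹ • h
  have step2 : a₀ * k = β⁻¹ • (a₀ * h) := by
    rw [eq_inv_smul_iff₀ hβ, ← e2, hha]
  have hkh : k = β⁻¹ • h := by
    have hc := congrArg (fun m => a₀ ^ 3 * m) step2
    rw [← Matrix.mul_assoc, h4, Matrix.one_mul, Matrix.mul_smul,
      ← Matrix.mul_assoc, h4, Matrix.one_mul] at hc
    exact hc
  have hka : k * a₀ = a₀ * k := by
    rw [hkh, Matrix.smul_mul, Matrix.mul_smul, hha]
  exact ⟨hga, hha, hka⟩

end Stmt13
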